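/- Let A be a simplicial complex on a nonempty finite set X with n elements. Then the average cardinality of a member of A satisfies av(A) = (Σ_{B ∈ A} |B|)/|A| ≤ n/2. -/

import Mathlib

open Finset

theorem aux_key {X : Type*} [Fintype X] [DecidableEq X]
    (A : Finset (Finset X)) (hdown : ∀ B ∈ A, ∀ C ⊆ B, C ∈ A) (x : X) :
    (A.filter (fun B => x ∈ B)).card ≤ (A.filter (fun B => x ∉ B)).card := by
  apply Finset.card_le_card_of_injOn (fun B => B.erase x)
  · intro B hB
    simp only [mem_coe, mem_filter] at hB ⊢
    exact ⟨hdown B hB.1 _ (erase_subset x B), notMem_erase x B⟩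
  · intro B hB C hC h
    simp only [coe_filter, Set.mem_setOf_eq] at hB hC
    have : insert x (B.erase x) = insert x (C.erase x) := congrArg (insert x) h
    rwa [insert_erase hB.2, insert_erase hC.2] at this

/-- For a simplicial complex `A` on a nonempty finite set `X` with `n` elements
(`∅ ∈ A` and `A` is closed under taking subsets), the average cardinality of a
member of `A` is at most `n / 2`. -/
theorem simplicialComplex_average_le_half {X : Type*} [Fintype X] [DecidableEq X]
    [Nonempty X] (A : Finset (Finset X))
    (hempty : ∅ ∈ A) (hdown : ∀ B ∈ A, ∀ C ⊆ B, C ∈ A) :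
    (∑ B ∈ A, (B.card : ℝ)) / (A.card : ℝ) ≤ (Fintype.card X : ℝ) / 2 := by
  have hA : 0 < (A.card : ℝ) := by
    exact_mod_cast Finset.card_pos.mpr ⟨∅, hempty⟩
  have h1 : ∑ B ∈ A, B.card = ∑ x : X, (A.filter (fun B => x ∈ B)).card := by
    simp only [Finset.card_filter]
    rw [Finset.sum_comm]
    congr 1; ext B
    simp [Finset.card_filter, Finset.filter_mem_eq_inter]
  have hc : ∑ B ∈ A, Bᶜ.card = ∑ x : X, (A.filter (fun B => x ∉ B)).card := by
    simp only [Finset.card_filter]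
    rw [Finset.sum_comm]
    congr 1; ext B
    have : Bᶜ = Finset.univ.filter (fun x => x ∉ B) := by
      ext x; simp
    rw [this, Finset.card_filter]
  have hle : ∑ B ∈ A, B.card ≤ ∑ B ∈ A, Bᶜ.card := by
    rw [h1, hc]
    exact Finset.sum_le_sum fun x _ => aux_key A hdown x
  have key : 2 * ∑ B ∈ A, B.card ≤ Fintype.card X * A.card := by
    have := Finset.sum_le_sum fun B (hB : B ∈ A) =>
      add_le_add_left (le_refl Bᶜ.card) B.card
    calc 2 * ∑ B ∈ A, B.card = ∑ B ∈ A, B.card + ∑ B ∈ A, B.card := by ring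
      _ ≤ ∑ B ∈ A, B.card + ∑ B ∈ A, Bᶜ.card := by omega
      _ = ∑ B ∈ A, (B.card + Bᶜ.card) := (Finset.sum_add_distrib).symm
      _ = ∑ B ∈ A, Fintype.card X := by
          apply Finset.sum_congr rfl
          intro B _
          exact Finset.card_add_card_compl B
      _ = Fintype.card X * A.card := by rw [Finset.sum_const, smul_eq_mul, mul_comm]
  rw [div_le_div_iff₀ hA (by norm_num)]
  have : (2 * ∑ B ∈ A, B.card : ℝ) ≤ (Fintype.card X * A.card : ℝ) := by
    exact_mod_cast key
  push_cast at this ⊢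
  linarith
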